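/- For every f ∈ Lip_0(M) and every x ∈ M, the sequence (Π_n(x)·f⁺(x))_{n∈ℕ} is nondecreasing in n and converges to f⁺(x), where f⁺ = max(f,0). Moreover Lip(Π_n·f) ≤ 12·Lip(f) for all n. -/

import Mathlib

open Filter Metric Topology NNReal


variable {M : Type*} [MetricSpace M]

/-- The "tent" function `Λ_n`, supported on the annulus `2^(n-1) < d(x,0) < 2^(n+1)`,
equal to `1` on the sphere `d(x,0) = 2^n` and affine in `d(x,0)` in between. -/
noncomputable def Lam (base : M) (n : ℤ) (x : M) : ℝ :=
  max 0 (min ((2:ℝ) ^ (1 - n) * dist x base - 1) (2 - (2:ℝ) ^ (-n) * dist x base))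

/-- The "plateau" function `Π_n`, equal to `1` on the annulus `2^(-n) ≤ d(x,0) ≤ 2^n`,
vanishing for `d(x,0) ≤ 2^(-(n+1))` and `d(x,0) ≥ 2^(n+1)`, affine in between. -/
noncomputable def Pla (base : M) (n : ℕ) (x : M) : ℝ :=
  max 0 (min 1 (min ((2:ℝ) ^ ((n:ℤ) + 1) * dist x base - 1)
    (2 - (2:ℝ) ^ (-(n:ℤ)) * dist x base)))

/-- The cutoff function `h_n`, equal to `1` on the ball `d(x,0) ≤ 2^n`, vanishing for
`d(x,0) ≥ 2^(n+1)`, and affine in `d(x,0)` in between. -/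
noncomputable def hfun (base : M) (n : ℤ) (x : M) : ℝ :=
  max 0 (min 1 (2 - (2:ℝ) ^ (-n) * dist x base))

/-- A 1-Lipschitz-type estimate for the cutoff shape `u ↦ max 0 (min 1 u)`. -/
lemma cutoff_abs (u v : ℝ) : |max 0 (min 1 u) - max 0 (min 1 v)| ≤ |u - v| := by
  calc |max 0 (min 1 u) - max 0 (min 1 v)|
      = |max (min 1 u) 0 - max (min 1 v) 0| := by rw [max_comm, max_comm (min 1 v)]
    _ ≤ |min 1 u - min 1 v| := abs_max_sub_max_le_abs _ _ _
    _ = |min u 1 - min v 1| := by rw [min_comm, min_comm (1:ℝ)]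
    _ ≤ max |u - v| |(1:ℝ) - 1| := abs_min_sub_min_le_max _ _ _ _
    _ ≤ |u - v| := by simp

/-- Multiplying a Lipschitz function by a `[0,1]`-valued weight. -/
lemma lip_mul_aux (F w : M → ℝ) (K' B : ℝ≥0)
    (hF : LipschitzWith K' F) (hw0 : ∀ x, 0 ≤ w x) (hw1 : ∀ x, w x ≤ 1)
    (hB : ∀ x y, |F y| ≤ |F x| → |F y| * |w x - w y| ≤ B * dist x y) :
    LipschitzWith (K' + B) (fun x => w x * F x) := by
  rw [lipschitzWith_iff_dist_le_mul]
  have key : ∀ x y : M, |F y| ≤ |F x| →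
      dist (w x * F x) (w y * F y) ≤ (K' + B) * dist x y := by
    intro x y h
    rw [Real.dist_eq]
    have e : w x * F x - w y * F y = w x * (F x - F y) + F y * (w x - w y) := by ring
    rw [e]
    have h1 : |w x * (F x - F y)| ≤ K' * dist x y := by
      rw [abs_mul]
      have := hF.dist_le_mul x y
      rw [Real.dist_eq] at this
      calc |w x| * |F x - F y| ≤ 1 * (K' * dist x y) := by
            apply mul_le_mul _ this (abs_nonneg _) zero_le_one
            rw [abs_of_nonneg (hw0 x)]; exact hw1 x
        _ = K' * dist x y := one_mul _
    have h2 : |F y * (w x - w y)| ≤ B * dist x y := by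
      rw [abs_mul]; exact hB x y h
    calc |w x * (F x - F y) + F y * (w x - w y)|
        ≤ |w x * (F x - F y)| + |F y * (w x - w y)| := abs_add_le _ _
      _ ≤ K' * dist x y + B * dist x y := add_le_add h1 h2
      _ = (↑(K' + B)) * dist x y := by push_cast; ring
  intro x y
  rcases le_total |F y| |F x| with h | h
  · exact key x y h
  · rw [dist_comm, dist_comm x y]; exact key y x h

/-- for `f ∈ Lip₀(M)`, the sequence `(Π_n(x)·f⁺(x))_n` is nondecreasing
and converges to `f⁺(x)` for every `x`, and `Lip(Π_n·f) ≤ 12·Lip(f)`. -/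
theorem plateau_truncation (base : M) (f : M → ℝ) (K : ℝ≥0)
    (hf : LipschitzWith K f) (hf0 : f base = 0) :
    (∀ x, Monotone fun n : ℕ => Pla base n x * max (f x) 0) ∧
    (∀ x, Tendsto (fun n : ℕ => Pla base n x * max (f x) 0) atTop (𝓝 (max (f x) 0))) ∧
    (∀ n : ℕ, LipschitzWith (12 * K) fun x => Pla base n x * f x) := by
  have hd0 : ∀ x : M, (0:ℝ) ≤ dist x base := fun x => dist_nonneg
  have hpow_pos : ∀ m : ℤ, (0:ℝ) < (2:ℝ) ^ m := fun m => zpow_pos (by norm_num) m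
  have hmul : ∀ n : ℕ, (2:ℝ) ^ ((n:ℤ) + 1) * (2:ℝ) ^ (-(n:ℤ)) = 2 := by
    intro n
    rw [← zpow_add₀ (by norm_num : (2:ℝ) ≠ 0)]
    norm_num
  have hle_one : ∀ n : ℕ, (2:ℝ) ^ (-(n:ℤ)) ≤ 1 := by
    intro n
    exact zpow_le_one_of_nonpos₀ one_le_two (by simp)
  refine ⟨?_, ?_, ?_⟩
  · -- Monotonicity
    intro x
    intro m n hmn
    have hc : (0:ℝ) ≤ max (f x) 0 := le_max_right _ _
    apply mul_le_mul_of_nonneg_right _ hc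
    unfold Pla
    have h1 : (2:ℝ) ^ ((m:ℤ) + 1) * dist x base - 1 ≤ (2:ℝ) ^ ((n:ℤ) + 1) * dist x base - 1 := by
      gcongr <;> norm_num
    have h2 : 2 - (2:ℝ) ^ (-(m:ℤ)) * dist x base ≤ 2 - (2:ℝ) ^ (-(n:ℤ)) * dist x base := by
      gcongr <;> norm_num
    exact max_le_max le_rfl (min_le_min le_rfl (min_le_min h1 h2))
  · -- Convergence
    intro x
    by_cases hx : x = base
    · have hfx : f x = 0 := by rw [hx]; exact hf0
      have : (fun n : ℕ => Pla base n x * max (f x) 0) = fun _ => max (f x) 0 := by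
        funext n
        rw [hfx]
        simp
      rw [this]
      exact tendsto_const_nhds
    · have hdx : 0 < dist x base := dist_pos.mpr hx
      obtain ⟨N₁, hN₁⟩ := exists_pow_lt_of_lt_one hdx (by norm_num : (1:ℝ)/2 < 1)
      obtain ⟨N₂, hN₂⟩ := pow_unbounded_of_one_lt (dist x base) (by norm_num : (1:ℝ) < 2)
      apply Tendsto.congr' _ (tendsto_const_nhds (x := max (f x) 0))
      filter_upwards [eventually_ge_atTop (max N₁ N₂)] with n hn
      have hn1 : N₁ ≤ n := le_trans (le_max_left _ _) hn
      have hn2 : N₂ ≤ n := le_trans (le_max_right _ _) hn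
      have hinv : (2:ℝ) ^ (-(n:ℤ)) ≤ (1/2:ℝ) ^ N₁ := by
        have : (2:ℝ) ^ (-(n:ℤ)) = (1/2:ℝ) ^ n := by
          rw [one_div, inv_pow, ← zpow_natCast (2:ℝ) n, ← zpow_neg]
        rw [this]
        exact pow_le_pow_of_le_one (by norm_num) (by norm_num) hn1
      have hAn : (1:ℝ) ≤ (2:ℝ) ^ ((n:ℤ) + 1) * dist x base - 1 := by
        have h1 : (2:ℝ) ^ (-(n:ℤ)) ≤ dist x base := le_trans hinv hN₁.le
        have h2 := hmul n
        have h3 := hpow_pos ((n:ℤ) + 1)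
        nlinarith
      have hBn : (1:ℝ) ≤ 2 - (2:ℝ) ^ (-(n:ℤ)) * dist x base := by
        have h1 : dist x base ≤ (2:ℝ) ^ n := le_trans hN₂.le (pow_le_pow_right₀ one_le_two hn2)
        have h2 : (2:ℝ) ^ (-(n:ℤ)) * dist x base ≤ (2:ℝ) ^ (-(n:ℤ)) * (2:ℝ) ^ n := by
          exact mul_le_mul_of_nonneg_left h1 (hpow_pos _).le
        have h3 : (2:ℝ) ^ (-(n:ℤ)) * (2:ℝ) ^ n = 1 := by
          rw [← zpow_natCast (2:ℝ) n, ← zpow_add₀ (by norm_num : (2:ℝ) ≠ 0)]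
          norm_num
        linarith
      have : Pla base n x = 1 := by
        unfold Pla
        rw [min_eq_left (le_min hAn hBn), max_eq_right zero_le_one]
      rw [this, one_mul]
  · -- Lipschitz bound
    intro n
    set g : M → ℝ := fun x => max 0 (min 1 ((2:ℝ) ^ ((n:ℤ) + 1) * dist x base - 1)) with hg_def
    set h : M → ℝ := fun x => max 0 (min 1 (2 - (2:ℝ) ^ (-(n:ℤ)) * dist x base)) with hh_def
    have hg0 : ∀ x, 0 ≤ g x := fun x => le_max_left _ _
    have hh0 : ∀ x, 0 ≤ h x := fun x => le_max_left _ _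
    have hg1 : ∀ x, g x ≤ 1 := fun x => max_le zero_le_one (min_le_left _ _)
    have hh1 : ∀ x, h x ≤ 1 := fun x => max_le zero_le_one (min_le_left _ _)
    -- |f z| ≤ K * dist z base
    have hfb : ∀ z : M, |f z| ≤ K * dist z base := by
      intro z
      have := hf.dist_le_mul z base
      rwa [Real.dist_eq, hf0, sub_zero] at this
    -- Step 1: h * f is (3K)-Lipschitz
    have hstep1 : LipschitzWith (K + 2 * K) (fun x => h x * f x) := by
      apply lip_mul_aux f h K (2 * K) hf hh0 hh1
      intro x y hle
      by_cases heq : h x = h y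
      · rw [heq, sub_self, abs_zero, mul_zero]
        positivity
      · -- one of h x, h y is positive
        have hpos : 0 < h x ∨ 0 < h y := by
          by_contra hcon
          push_neg at hcon
          have e1 : h x = 0 := le_antisymm hcon.1 (hh0 x)
          have e2 : h y = 0 := le_antisymm hcon.2 (hh0 y)
          exact heq (e1.trans e2.symm)
        have hbound : |f y| ≤ K * (2 * (2:ℝ) ^ (n:ℤ)) := by
          have key : ∀ z : M, 0 < h z → |f z| ≤ K * (2 * (2:ℝ) ^ (n:ℤ)) := by
            intro z hz
            have h1 : 0 < min 1 (2 - (2:ℝ) ^ (-(n:ℤ)) * dist z base) := by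
              by_contra hc
              push_neg at hc
              rw [hh_def] at hz
              simp only [max_eq_left hc] at hz
              exact lt_irrefl 0 hz
            have h2 : 0 < 2 - (2:ℝ) ^ (-(n:ℤ)) * dist z base := lt_of_lt_of_le h1 (min_le_right _ _)
            have h3 : dist z base ≤ 2 * (2:ℝ) ^ (n:ℤ) := by
              have hp := hpow_pos (-(n:ℤ))
              have hq : (2:ℝ) ^ (-(n:ℤ)) * (2:ℝ) ^ (n:ℤ) = 1 := by
                rw [← zpow_add₀ (by norm_num : (2:ℝ) ≠ 0)]; norm_num
              nlinarith [hd0 z]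
            calc |f z| ≤ K * dist z base := hfb z
              _ ≤ K * (2 * (2:ℝ) ^ (n:ℤ)) := by
                  exact mul_le_mul_of_nonneg_left h3 K.coe_nonneg
          rcases hpos with hz | hz
          · exact le_trans hle (key x hz)
          · exact key y hz
        have hwlip : |h x - h y| ≤ (2:ℝ) ^ (-(n:ℤ)) * dist x y := by
          rw [hh_def]
          calc |max 0 (min 1 (2 - (2:ℝ) ^ (-(n:ℤ)) * dist x base)) -
                max 0 (min 1 (2 - (2:ℝ) ^ (-(n:ℤ)) * dist y base))|
              ≤ |(2 - (2:ℝ) ^ (-(n:ℤ)) * dist x base) -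
                 (2 - (2:ℝ) ^ (-(n:ℤ)) * dist y base)| := cutoff_abs _ _
            _ = (2:ℝ) ^ (-(n:ℤ)) * |dist x base - dist y base| := by
                rw [show (2 - (2:ℝ) ^ (-(n:ℤ)) * dist x base) -
                      (2 - (2:ℝ) ^ (-(n:ℤ)) * dist y base)
                    = (2:ℝ) ^ (-(n:ℤ)) * (dist y base - dist x base) from by ring,
                  abs_mul, abs_of_pos (hpow_pos _), abs_sub_comm]
            _ ≤ (2:ℝ) ^ (-(n:ℤ)) * dist x y := by
                exact mul_le_mul_of_nonneg_left (abs_dist_sub_le x y base) (hpow_pos _).le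
        calc |f y| * |h x - h y|
            ≤ (K * (2 * (2:ℝ) ^ (n:ℤ))) * ((2:ℝ) ^ (-(n:ℤ)) * dist x y) := by
              apply mul_le_mul hbound hwlip (abs_nonneg _)
              positivity
          _ = ((2:ℝ) ^ (n:ℤ) * (2:ℝ) ^ (-(n:ℤ))) * (2 * K * dist x y) := by ring
          _ = ↑(2 * K) * dist x y := by
              rw [← zpow_add₀ (by norm_num : (2:ℝ) ≠ 0)]
              push_cast
              norm_num
    -- Step 2: g * (h * f) is (5K)-Lipschitz
    have hstep2 : LipschitzWith ((K + 2 * K) + 2 * K) (fun x => g x * (h x * f x)) := by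
      apply lip_mul_aux (fun x => h x * f x) g (K + 2 * K) (2 * K) hstep1 hg0 hg1
      intro x y hle
      by_cases heq : g x = g y
      · rw [heq, sub_self, abs_zero, mul_zero]
        positivity
      · have hlt : g x < 1 ∨ g y < 1 := by
          by_contra hcon
          push_neg at hcon
          have e1 : g x = 1 := le_antisymm (hg1 x) hcon.1
          have e2 : g y = 1 := le_antisymm (hg1 y) hcon.2
          exact heq (e1.trans e2.symm)
        have hbound : |h y * f y| ≤ K * (2:ℝ) ^ (-(n:ℤ)) := by
          have key : ∀ z : M, g z < 1 → |h z * f z| ≤ K * (2:ℝ) ^ (-(n:ℤ)) := by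
            intro z hz
            have h1 : (2:ℝ) ^ ((n:ℤ) + 1) * dist z base - 1 < 1 := by
              by_contra hc
              push_neg at hc
              have : g z = 1 := by
                rw [hg_def]
                simp only
                rw [min_eq_left hc, max_eq_right zero_le_one]
              rw [this] at hz; exact lt_irrefl 1 hz
            have h3 : dist z base ≤ (2:ℝ) ^ (-(n:ℤ)) := by
              have hp := hpow_pos ((n:ℤ) + 1)
              have hq := hmul n
              nlinarith [hd0 z]
            calc |h z * f z| = |h z| * |f z| := abs_mul _ _
              _ ≤ 1 * (K * dist z base) := by
                  apply mul_le_mul _ (hfb z) (abs_nonneg _) zero_le_one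
                  rw [abs_of_nonneg (hh0 z)]; exact hh1 z
              _ = K * dist z base := one_mul _
              _ ≤ K * (2:ℝ) ^ (-(n:ℤ)) := mul_le_mul_of_nonneg_left h3 K.coe_nonneg
          rcases hlt with hz | hz
          · exact le_trans hle (key x hz)
          · exact key y hz
        have hwlip : |g x - g y| ≤ (2:ℝ) ^ ((n:ℤ) + 1) * dist x y := by
          rw [hg_def]
          calc |max 0 (min 1 ((2:ℝ) ^ ((n:ℤ) + 1) * dist x base - 1)) -
                max 0 (min 1 ((2:ℝ) ^ ((n:ℤ) + 1) * dist y base - 1))|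
              ≤ |((2:ℝ) ^ ((n:ℤ) + 1) * dist x base - 1) -
                 ((2:ℝ) ^ ((n:ℤ) + 1) * dist y base - 1)| := cutoff_abs _ _
            _ = (2:ℝ) ^ ((n:ℤ) + 1) * |dist x base - dist y base| := by
                rw [show ((2:ℝ) ^ ((n:ℤ) + 1) * dist x base - 1) -
                      ((2:ℝ) ^ ((n:ℤ) + 1) * dist y base - 1)
                    = (2:ℝ) ^ ((n:ℤ) + 1) * (dist x base - dist y base) from by ring,
                  abs_mul, abs_of_pos (hpow_pos _)]
            _ ≤ (2:ℝ) ^ ((n:ℤ) + 1) * dist x y := by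
                exact mul_le_mul_of_nonneg_left (abs_dist_sub_le x y base) (hpow_pos _).le
        calc |h y * f y| * |g x - g y|
            ≤ (K * (2:ℝ) ^ (-(n:ℤ))) * ((2:ℝ) ^ ((n:ℤ) + 1) * dist x y) := by
              apply mul_le_mul hbound hwlip (abs_nonneg _)
              positivity
          _ = ((2:ℝ) ^ ((n:ℤ) + 1) * (2:ℝ) ^ (-(n:ℤ))) * (K * dist x y) := by ring
          _ = ↑(2 * K) * dist x y := by
              rw [hmul n]
              push_cast
              ring
    -- the factorization Pla = g * h
    have hfact : ∀ x : M, Pla base n x * f x = g x * (h x * f x) := by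
      intro x
      have : Pla base n x = g x * h x := by
        unfold Pla
        rw [hg_def, hh_def]
        simp only
        set A := (2:ℝ) ^ ((n:ℤ) + 1) * dist x base - 1 with hA
        set B := 2 - (2:ℝ) ^ (-(n:ℤ)) * dist x base with hB
        have hkey : 1 ≤ A ∨ 1 ≤ B := by
          by_cases hA1 : 1 ≤ A
          · exact Or.inl hA1
          · right
            push_neg at hA1
            have hp := hpow_pos ((n:ℤ) + 1)
            have hq := hmul n
            have hr := hle_one n
            have hs := hpow_pos (-(n:ℤ))
            rw [hA] at hA1
            rw [hB]
            -- from 2^(n+1)*d < 2 we get d < 2^(-n) ≤ 1, so 2^(-n)*d ≤ d < 1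
            have hd : dist x base < (2:ℝ) ^ (-(n:ℤ)) := by nlinarith [hd0 x]
            nlinarith [hd0 x]
        rcases hkey with hA1 | hB1
        · have e1 : min 1 A = 1 := min_eq_left hA1
          have e2 : min 1 (min A B) = min 1 B := by
            rw [← min_assoc, e1]
          rw [e2]
          have e3 : max 0 (min 1 A) = 1 := by rw [e1, max_eq_right zero_le_one]
          rw [e3, one_mul]
        · have e1 : min 1 B = 1 := min_eq_left hB1
          have e2 : min 1 (min A B) = min 1 A := by
            rw [min_comm A B, ← min_assoc, e1]
          rw [e2]
          have e3 : max 0 (min 1 B) = 1 := by rw [e1, max_eq_right zero_le_one]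
          rw [e3, mul_one]
      rw [this, mul_assoc]
    have heq : (fun x => Pla base n x * f x) = fun x => g x * (h x * f x) := funext hfact
    rw [heq]
    apply hstep2.weaken
    have : (K + 2 * K) + 2 * K = 5 * K := by ring
    rw [this]
    exact mul_le_mul_left (by norm_num) K
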